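/- Let n ≥ 4 be even, let C_1 = {1,…,n/2} and C_2 = {n/2+1,…,n}, and let X = {x_1,…,x_n} ⊂ ℝ^{n−1} be the dataset with x_i = 0 for i ∈ C_1 and x_i = e_1 for i ∈ C_2. Fix perplexity ρ ∈ (1, n−1); by symmetry all calibrated bandwidths σ_i* equal a common value σ > 0. Then: (1) the symmetrized input affinities are P_{ij} = 1/( n²/2 − n + (n²/2)·exp(−1/(2σ²)) ) if i ≠ j lie in the same cluster, and P_{ij} = exp(−1/(2σ²)) / ( n²/2 − n + (n²/2)·exp(−1/(2σ²)) ) if i, j lie in different clusters; and (2) the one-dimensional output Y = {y_1,…,y_n} ⊂ ℝ with y_i = 0 for i ∈ C_1 and y_i = √(exp(1/(2σ²)) − 1) for i ∈ C_2 satisfies Q_{ij}(Y) = P_{ij} for all i, j, hence L_X(Y) = KL(P‖Q) = 0 and Y is a global minimizer of the t-SNE loss. -/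

import Mathlib

open scoped BigOperators RealInnerProductSpace
noncomputable section

namespace TSNEPaper

variable {n k : ℕ} {E F : Type*}

/-- The set of nearest neighbors of point `i` (used for the `σ = 0` limit of the
conditional affinity). -/
def nearestSet [NormedAddCommGroup E] (X : Fin n → E) (i : Fin n) : Finset (Fin n) :=
  (Finset.univ.erase i).filter fun j => ∀ l ∈ Finset.univ.erase i, ‖X i - X j‖ ≤ ‖X i - X l‖

/-- Conditional t-SNE affinity `P_{j|i}(X; σ)`.  For `σ = 0` we take the limiting value
as `σ → 0⁺`, which puts equal mass on the nearest neighbors of `i`. -/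
def condAffinity [NormedAddCommGroup E] (X : Fin n → E) (σ : ℝ) (i j : Fin n) : ℝ :=
  if j = i then 0
  else if σ = 0 then (if j ∈ nearestSet X i then ((nearestSet X i).card : ℝ)⁻¹ else 0)
  else Real.exp (-‖X i - X j‖ ^ 2 / (2 * σ ^ 2)) /
      ∑ l ∈ Finset.univ.erase i, Real.exp (-‖X i - X l‖ ^ 2 / (2 * σ ^ 2))

/-- Base-2 Shannon entropy of a distribution on `Fin n`. -/
def entropy2 (p : Fin n → ℝ) : ℝ := -∑ j, p j * Real.logb 2 (p j)

/-- `σ` is a perplexity-`ρ`-calibrated bandwidth for point `i`: it is nonnegative and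
minimizes the gap between the entropy of `P_{·|i}(X;σ)` and `log₂ ρ`. -/
def IsCalibrated [NormedAddCommGroup E] (X : Fin n → E) (ρ : ℝ) (i : Fin n) (σ : ℝ) : Prop :=
  0 ≤ σ ∧ ∀ σ' : ℝ, 0 ≤ σ' →
    |entropy2 (condAffinity X σ i) - Real.logb 2 ρ| ≤
      |entropy2 (condAffinity X σ' i) - Real.logb 2 ρ|

/-- The calibrated bandwidth `σ_i^*` (well defined by uniqueness of the minimizer). -/
def sigmaStar [NormedAddCommGroup E] (X : Fin n → E) (ρ : ℝ) (i : Fin n) : ℝ :=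
  Classical.epsilon (IsCalibrated X ρ i)

/-- Symmetrized input affinity `P_{ij}(X)`. -/
def inAffinity [NormedAddCommGroup E] (X : Fin n → E) (ρ : ℝ) (i j : Fin n) : ℝ :=
  if i = j then 0
  else (condAffinity X (sigmaStar X ρ j) j i + condAffinity X (sigmaStar X ρ i) i j) / (2 * n)

/-- Output affinity `Q_{ij}(Y)`. -/
def outAffinity [NormedAddCommGroup F] (Y : Fin n → F) (i j : Fin n) : ℝ :=
  if i = j then 0
  else (1 + ‖Y i - Y j‖ ^ 2)⁻¹ /
    ∑ p ∈ Finset.univ.offDiag, (1 + ‖Y p.1 - Y p.2‖ ^ 2)⁻¹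

/-- The t-SNE loss `L_X(Y) = KL(P(X) ‖ Q(Y))`. -/
def tsneLoss {d : ℕ} [NormedAddCommGroup E] (X : Fin n → E) (ρ : ℝ)
    (Y : Fin n → EuclideanSpace ℝ (Fin d)) : ℝ :=
  ∑ p ∈ Finset.univ.offDiag,
    inAffinity X ρ p.1 p.2 * Real.log (inAffinity X ρ p.1 p.2 / outAffinity Y p.1 p.2)

/-- The set of stationary t-SNE outputs in `ℝ^d` for input `X` and perplexity `ρ`. -/
def TSNE [NormedAddCommGroup E] (d : ℕ) (ρ : ℝ) (X : Fin n → E) :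
    Set (Fin n → EuclideanSpace ℝ (Fin d)) :=
  {Y : Fin n → EuclideanSpace ℝ (Fin d) | fderiv ℝ (tsneLoss X ρ) Y = 0}

/-- The image of t-SNE: all stationary outputs over all `n`-point inputs in `ℝ^{n-1}`. -/
def IMTSNE (n d : ℕ) (ρ : ℝ) : Set (Fin n → EuclideanSpace ℝ (Fin d)) :=
  ⋃ X : Fin n → EuclideanSpace ℝ (Fin (n - 1)), TSNE d ρ X

/-- The `m`-th cluster of the partition of `[n]` encoded by the labelling `ℓ`. -/
def cluster (ℓ : Fin n → Fin k) (m : Fin k) : Finset (Fin n) :=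
  Finset.univ.filter fun i => ℓ i = m

/-- Average within-cluster distance `a(i)`. -/
def aScore [NormedAddCommGroup E] (X : Fin n → E) (ℓ : Fin n → Fin k) (i : Fin n) : ℝ :=
  (∑ j ∈ cluster ℓ (ℓ i), ‖X i - X j‖) / (((cluster ℓ (ℓ i)).card : ℝ) - 1)

/-- Closest average across-cluster distance `b(i)`. -/
def bScore [NormedAddCommGroup E] (X : Fin n → E) (ℓ : Fin n → Fin k) (i : Fin n) : ℝ :=
  sInf {r : ℝ | ∃ m : Fin k, m ≠ ℓ i ∧
    r = (∑ j ∈ cluster ℓ m, ‖X i - X j‖) / ((cluster ℓ m).card : ℝ)}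

/-- Silhouette score of point `i`. -/
def silhouette [NormedAddCommGroup E] (X : Fin n → E) (ℓ : Fin n → Fin k) (i : Fin n) : ℝ :=
  if (cluster ℓ (ℓ i)).card = 1 then 0
  else (bScore X ℓ i - aScore X ℓ i) / max (aScore X ℓ i) (bScore X ℓ i)

/-- Average silhouette score `S̄(X; C₁,…,C_k)`. -/
def avgSilhouette [NormedAddCommGroup E] (X : Fin n → E) (ℓ : Fin n → Fin k) : ℝ :=
  (∑ i, silhouette X ℓ i) / (n : ℝ)

/-- Centroid `E(S)` of the points indexed by `S`. -/
def centroid [NormedAddCommGroup E] [NormedSpace ℝ E] (X : Fin n → E)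
    (S : Finset (Fin n)) : E :=
  ((S.card : ℝ))⁻¹ • ∑ i ∈ S, X i

/-- Numerator (between-cluster term) of the Calinski–Harabasz index. -/
def chNum [NormedAddCommGroup E] [NormedSpace ℝ E] (X : Fin n → E) (ℓ : Fin n → Fin k) : ℝ :=
  ((k : ℝ) - 1)⁻¹ *
    ∑ m : Fin k, ((cluster ℓ m).card : ℝ) *
      ‖centroid X (cluster ℓ m) - centroid X Finset.univ‖ ^ 2

/-- Denominator (within-cluster term) of the Calinski–Harabasz index. -/
def chDen [NormedAddCommGroup E] [NormedSpace ℝ E] (X : Fin n → E) (ℓ : Fin n → Fin k) : ℝ :=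
  ((n : ℝ) - (k : ℝ))⁻¹ *
    ∑ m : Fin k, ∑ i ∈ cluster ℓ m, ‖X i - centroid X (cluster ℓ m)‖ ^ 2

/-- Calinski–Harabasz index, valued in `[0,∞]`, with the conventions `CH = 1` when both
numerator and denominator vanish and `CH = ∞` when only the denominator vanishes. -/
def CHindex [NormedAddCommGroup E] [NormedSpace ℝ E] (X : Fin n → E) (ℓ : Fin n → Fin k) :
    EReal :=
  if chDen X ℓ = 0 then (if chNum X ℓ = 0 then 1 else ⊤)
  else ((chNum X ℓ / chDen X ℓ : ℝ) : EReal)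

/-- Minimum between-cluster distance (numerator of the Dunn index). -/
def diNum [NormedAddCommGroup E] (X : Fin n → E) (ℓ : Fin n → Fin k) : ℝ :=
  sInf {r : ℝ | ∃ i j : Fin n, ℓ i ≠ ℓ j ∧ r = ‖X i - X j‖}

/-- Maximum within-cluster distance (denominator of the Dunn index). -/
def diDen [NormedAddCommGroup E] (X : Fin n → E) (ℓ : Fin n → Fin k) : ℝ :=
  sSup {r : ℝ | ∃ i j : Fin n, ℓ i = ℓ j ∧ r = ‖X i - X j‖}

/-- Dunn index, valued in `[0,∞]`, with the conventions `DI = 1` when both numerator and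
denominator vanish and `DI = ∞` when only the denominator vanishes. -/
def DIindex [NormedAddCommGroup E] (X : Fin n → E) (ℓ : Fin n → Fin k) : EReal :=
  if diDen X ℓ = 0 then (if diNum X ℓ = 0 then 1 else ⊤)
  else ((diNum X ℓ / diDen X ℓ : ℝ) : EReal)

/-- `Y` is an `(α, Y i₀)`-outlier configuration: there is a hyperplane (with unit normal `v`)
separating `Y i₀` from the remaining points with margin width at least
`α · max{1, diam(Y ∖ {Y i₀})}`. -/
def IsOutlierConfig [NormedAddCommGroup F] [InnerProductSpace ℝ F] (Y : Fin n → F)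
    (i0 : Fin n) (α : ℝ) : Prop :=
  0 < α ∧ ∃ v : F, ‖v‖ = 1 ∧ ∀ i : Fin n, i ≠ i0 →
    α * max 1 (Metric.diam (Y '' {i : Fin n | i ≠ i0})) ≤ ⟪Y i - Y i0, v⟫

/-- The outlier number `α(Y, y₀)`: the largest `α` for which `Y` is an `(α, Y i₀)`-outlier
configuration (`0` if there is none). -/
def outlierNumber [NormedAddCommGroup F] [InnerProductSpace ℝ F] (Y : Fin n → F)
    (i0 : Fin n) : ℝ :=
  sSup {α : ℝ | IsOutlierConfig Y i0 α}



/-- Auxiliary entropy function: natural-log entropy of the two-level distribution with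
`a` points of weight `1` and `b` points of weight `t`. -/
def fent (a b t : ℝ) : ℝ :=
  Real.log (a + b * t) - b * (t * Real.log t) / (a + b * t)

lemma fent_cont {a b : ℝ} (ha : 0 < a) (hb : 0 < b) :
    ContinuousOn (fent a b) (Set.Icc 0 1) := by
  have hpos : ∀ t ∈ Set.Icc (0:ℝ) 1, a + b * t ≠ 0 := by
    intro t ht
    have : 0 < a + b * t := by nlinarith [ht.1]
    linarith
  apply ContinuousOn.sub
  · exact (Real.continuousOn_log.comp (by fun_prop) (fun t ht => hpos t ht))
  · exact ContinuousOn.div ((continuous_const.mul Real.continuous_mul_log).continuousOn)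
      (by fun_prop) hpos

lemma fent_hasDeriv {a b : ℝ} (ha : 0 < a) (hb : 0 < b) {t : ℝ} (ht : t ∈ Set.Ioo (0:ℝ) 1) :
    HasDerivAt (fent a b) (a * b * (-Real.log t) / (a + b * t) ^ 2) t := by
  have ht0 : 0 < t := ht.1
  have hZ : 0 < a + b * t := by nlinarith
  have h1 : HasDerivAt (fun s : ℝ => a + b * s) b t := by
    simpa using ((hasDerivAt_id t).const_mul b).const_add a
  have h2 : HasDerivAt (fun s : ℝ => Real.log (a + b * s)) (b / (a + b * t)) t :=
    h1.log hZ.ne'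
  have h3 : HasDerivAt (fun s : ℝ => s * Real.log s) (Real.log t + 1) t := by
    have := (hasDerivAt_id t).mul (Real.hasDerivAt_log ht0.ne')
    exact this.congr_deriv (by simp only [id_eq, one_mul, mul_inv_cancel₀ ht0.ne'])
  have h4 : HasDerivAt (fun s : ℝ => b * (s * Real.log s)) (b * (Real.log t + 1)) t :=
    h3.const_mul b
  have h5 : HasDerivAt (fun s : ℝ => b * (s * Real.log s) / (a + b * s))
      ((b * (Real.log t + 1) * (a + b * t) - b * (t * Real.log t) * b) / (a + b * t) ^ 2) t :=
    h4.div h1 hZ.ne'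
  have h6 := h2.sub h5
  refine h6.congr_deriv ?_
  rw [div_sub_div _ _ hZ.ne' (pow_ne_zero 2 hZ.ne'),
    div_eq_div_iff (mul_ne_zero hZ.ne' (pow_ne_zero 2 hZ.ne')) (pow_ne_zero 2 hZ.ne')]
  ring

lemma fent_strictMono {a b : ℝ} (ha : 0 < a) (hb : 0 < b) :
    StrictMonoOn (fent a b) (Set.Icc 0 1) := by
  apply strictMonoOn_of_deriv_pos (convex_Icc 0 1) (fent_cont ha hb)
  intro t ht
  rw [interior_Icc] at ht
  rw [(fent_hasDeriv ha hb ht).deriv]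
  have h1 : 0 < -Real.log t := by
    have := Real.log_neg ht.1 ht.2
    linarith
  have hZ : 0 < a + b * t := by nlinarith [ht.1]
  positivity

lemma fent_zero {a b : ℝ} : fent a b 0 = Real.log a := by simp [fent]

lemma fent_one {a b : ℝ} : fent a b 1 = Real.log (a + b) := by simp [fent]

set_option maxHeartbeats 2000000 in
/-- explicit two-cluster example. For the dataset with one cluster at `0` and
one at `e₁`, the symmetrized input affinities have the stated closed form, and the explicit
one-dimensional output `Y` satisfies `Q(Y) = P(X)`, has zero loss, and is a global
minimizer of the t-SNE loss. -/
theorem two_cluster_example (n : ℕ) (hn : 4 ≤ n) (heven : Even n)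
    (X : Fin n → EuclideanSpace ℝ (Fin (n - 1)))
    (hX : ∀ i : Fin n, X i = if (i : ℕ) < n / 2 then 0
      else EuclideanSpace.single (⟨0, by omega⟩ : Fin (n - 1)) (1 : ℝ))
    (ρ : ℝ) (hρ : 1 < ρ) (hρ' : ρ < (n : ℝ) - 1)
    (σ : ℝ) (hσpos : 0 < σ) (hσ : ∀ i : Fin n, IsCalibrated X ρ i σ)
    (Y : Fin n → EuclideanSpace ℝ (Fin 1))
    (hY : ∀ i : Fin n, Y i = if (i : ℕ) < n / 2 then 0
      else EuclideanSpace.single 0 (Real.sqrt (Real.exp (1 / (2 * σ ^ 2)) - 1))) :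
    (∀ i j : Fin n, i ≠ j → (((i : ℕ) < n / 2) ↔ ((j : ℕ) < n / 2)) →
      inAffinity X ρ i j =
        ((n : ℝ) ^ 2 / 2 - n + (n : ℝ) ^ 2 / 2 * Real.exp (-1 / (2 * σ ^ 2)))⁻¹) ∧
    (∀ i j : Fin n, ¬(((i : ℕ) < n / 2) ↔ ((j : ℕ) < n / 2)) →
      inAffinity X ρ i j =
        Real.exp (-1 / (2 * σ ^ 2)) /
          ((n : ℝ) ^ 2 / 2 - n + (n : ℝ) ^ 2 / 2 * Real.exp (-1 / (2 * σ ^ 2)))) ∧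
    (∀ i j : Fin n, outAffinity Y i j = inAffinity X ρ i j) ∧
    tsneLoss X ρ Y = 0 ∧
    (∀ Y' : Fin n → EuclideanSpace ℝ (Fin 1), tsneLoss X ρ Y ≤ tsneLoss X ρ Y') := by
  classical
  obtain ⟨m, hm⟩ := heven
  have hm2 : 2 ≤ m := by omega
  have hn2 : n / 2 = m := by omega
  have hl2 : (0:ℝ) < Real.log 2 := Real.log_pos one_lt_two
  have hmR : (2:ℝ) ≤ (m:ℝ) := by exact_mod_cast hm2
  have ha0 : (0:ℝ) < (m:ℝ) - 1 := by linarith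
  have hb0 : (0:ℝ) < (m:ℝ) := by linarith
  have hnR : (n:ℝ) = 2 * (m:ℝ) := by
    rw [hm]; push_cast; ring
  -- distances
  have hdist : ∀ i j : Fin n, ‖X i - X j‖ =
      if (((i : ℕ) < n / 2) ↔ ((j : ℕ) < n / 2)) then 0 else 1 := by
    intro i j
    rw [hX i, hX j]
    by_cases hi : (i : ℕ) < n / 2 <;> by_cases hj : (j : ℕ) < n / 2 <;>
      simp [hi, hj, EuclideanSpace.norm_single]
  -- cardinalities
  have hcardlt : (Finset.univ.filter fun j : Fin n => (j : ℕ) < n / 2).card = m := by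
    have hmn : m < n := by omega
    have h : (Finset.univ.filter fun j : Fin n => (j : ℕ) < n / 2)
        = Finset.Iio (⟨m, hmn⟩ : Fin n) := by
      ext j; simp [Fin.lt_def, hn2]
    rw [h, Fin.card_Iio]
  have hcardge : (Finset.univ.filter fun j : Fin n => ¬ (j : ℕ) < n / 2).card = m := by
    have h := Finset.card_filter_add_card_filter_not
      (s := (Finset.univ : Finset (Fin n))) (p := fun j : Fin n => (j : ℕ) < n / 2)
    rw [hcardlt, Finset.card_univ, Fintype.card_fin] at h
    omega
  have hfiltercard : ∀ i : Fin n,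
      (Finset.univ.filter fun j : Fin n => (((i : ℕ) < n / 2) ↔ ((j : ℕ) < n / 2))).card = m := by
    intro i
    by_cases hi : (i : ℕ) < n / 2
    · have h : (Finset.univ.filter fun j : Fin n => (((i : ℕ) < n / 2) ↔ ((j : ℕ) < n / 2)))
          = Finset.univ.filter fun j : Fin n => (j : ℕ) < n / 2 := by
        apply Finset.filter_congr; intro j _; simp [hi]
      rw [h, hcardlt]
    · have h : (Finset.univ.filter fun j : Fin n => (((i : ℕ) < n / 2) ↔ ((j : ℕ) < n / 2)))
          = Finset.univ.filter fun j : Fin n => ¬ (j : ℕ) < n / 2 := by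
        apply Finset.filter_congr; intro j _; simp [hi]
      rw [h, hcardge]
  have hfiltercard' : ∀ i : Fin n,
      (Finset.univ.filter fun j : Fin n => ¬ (((i : ℕ) < n / 2) ↔ ((j : ℕ) < n / 2))).card = m := by
    intro i
    have h := Finset.card_filter_add_card_filter_not
      (s := (Finset.univ : Finset (Fin n)))
      (p := fun j : Fin n => (((i : ℕ) < n / 2) ↔ ((j : ℕ) < n / 2)))
    rw [hfiltercard i, Finset.card_univ, Fintype.card_fin] at h
    omega
  have hsumAux : ∀ (i : Fin n) (c d : ℝ),
      (∑ j : Fin n, if (((i : ℕ) < n / 2) ↔ ((j : ℕ) < n / 2)) then c else d)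
        = m * c + m * d := by
    intro i c d
    rw [Finset.sum_ite, Finset.sum_const, Finset.sum_const, nsmul_eq_mul, nsmul_eq_mul,
      hfiltercard i, hfiltercard' i]
  -- partition sum over the erased universe
  have hZ : ∀ (σ' : ℝ) (i : Fin n),
      ∑ l ∈ Finset.univ.erase i, Real.exp (-‖X i - X l‖ ^ 2 / (2 * σ' ^ 2))
        = ((m:ℝ) - 1) + m * Real.exp (-1 / (2 * σ' ^ 2)) := by
    intro σ' i
    rw [Finset.sum_erase_eq_sub (Finset.mem_univ i)]
    have h1 : ∀ l : Fin n, Real.exp (-‖X i - X l‖ ^ 2 / (2 * σ' ^ 2))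
        = if (((i : ℕ) < n / 2) ↔ ((l : ℕ) < n / 2)) then 1
          else Real.exp (-1 / (2 * σ' ^ 2)) := by
      intro l
      rw [hdist i l]
      split_ifs with h <;> norm_num
    rw [Finset.sum_congr rfl (fun l _ => h1 l), hsumAux, h1 i, if_pos Iff.rfl]
    ring
  have hZpos : ∀ t : ℝ, 0 ≤ t → (0:ℝ) < ((m:ℝ) - 1) + m * t := by
    intro t ht; nlinarith
  -- conditional affinity formula
  have hcond : ∀ (σ' : ℝ), σ' ≠ 0 → ∀ i j : Fin n, j ≠ i →
      condAffinity X σ' i j =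
        (if (((i : ℕ) < n / 2) ↔ ((j : ℕ) < n / 2)) then 1 else Real.exp (-1 / (2 * σ' ^ 2)))
          / (((m:ℝ) - 1) + m * Real.exp (-1 / (2 * σ' ^ 2))) := by
    intro σ' hs i j hji
    rw [condAffinity, if_neg hji, if_neg hs, hZ]
    congr 1
    rw [hdist i j]
    split_ifs with h <;> norm_num
  -- entropy formula for positive bandwidth
  have hent : ∀ (σ' : ℝ), σ' ≠ 0 → ∀ i : Fin n,
      entropy2 (condAffinity X σ' i)
        = fent ((m:ℝ) - 1) (m:ℝ) (Real.exp (-1 / (2 * σ' ^ 2))) / Real.log 2 := by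
    intro σ' hs i
    have ht0 : (0:ℝ) < Real.exp (-1 / (2 * σ' ^ 2)) := Real.exp_pos _
    set t := Real.exp (-1 / (2 * σ' ^ 2)) with htdef
    set Z := ((m:ℝ) - 1) + m * t with hZdef
    have hZ0 : (0:ℝ) < Z := hZpos t ht0.le
    set c1 : ℝ := 1 / Z * Real.logb 2 (1 / Z) with hc1
    set c2 : ℝ := t / Z * Real.logb 2 (t / Z) with hc2
    have key : ∀ j : Fin n, condAffinity X σ' i j * Real.logb 2 (condAffinity X σ' i j)
        = if j = i then 0
          else if (((i : ℕ) < n / 2) ↔ ((j : ℕ) < n / 2)) then c1 else c2 := by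
      intro j
      by_cases hji : j = i
      · simp [hji, condAffinity]
      · rw [hcond σ' hs i j hji, if_neg hji]
        split_ifs with h <;> simp only [hc1, hc2, htdef, hZdef]
    unfold entropy2
    rw [Finset.sum_congr rfl (fun j _ => key j),
      ← Finset.add_sum_erase _ _ (Finset.mem_univ i), if_pos rfl, zero_add]
    have h2 : ∑ j ∈ Finset.univ.erase i,
        (if j = i then 0 else if (((i : ℕ) < n / 2) ↔ ((j : ℕ) < n / 2)) then c1 else c2)
        = ∑ j ∈ Finset.univ.erase i,
          (if (((i : ℕ) < n / 2) ↔ ((j : ℕ) < n / 2)) then c1 else c2) := by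
      apply Finset.sum_congr rfl
      intro j hj
      rw [if_neg (Finset.ne_of_mem_erase hj)]
    rw [h2, Finset.sum_erase_eq_sub (Finset.mem_univ i), hsumAux, if_pos Iff.rfl]
    have hlogZ : Real.logb 2 (1 / Z) = (Real.log 1 - Real.log Z) / Real.log 2 := by
      rw [← Real.log_div_log, Real.log_div one_ne_zero hZ0.ne']
    have hlogt : Real.logb 2 (t / Z) = (Real.log t - Real.log Z) / Real.log 2 := by
      rw [← Real.log_div_log, Real.log_div ht0.ne' hZ0.ne']
    rw [hc1, hc2, hlogZ, hlogt, Real.log_one, fent, ← hZdef]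
    field_simp
    ring
  -- the nearest-neighbour set
  have hpartner : ∀ i : Fin n, ∃ j : Fin n,
      j ≠ i ∧ (((i : ℕ) < n / 2) ↔ ((j : ℕ) < n / 2)) := by
    intro i
    by_cases hi : (i : ℕ) < n / 2
    · refine ⟨if (i : ℕ) = 0 then ⟨1, by omega⟩ else ⟨0, by omega⟩, ?_, ?_⟩
      · split_ifs with h <;> · simp only [ne_eq, Fin.ext_iff]; omega
      · split_ifs with h <;> simp [hi] <;> omega
    · refine ⟨if (i : ℕ) = n / 2 then ⟨n / 2 + 1, by omega⟩ else ⟨n / 2, by omega⟩, ?_, ?_⟩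
      · split_ifs with h <;> · simp only [ne_eq, Fin.ext_iff]; omega
      · split_ifs with h <;> simp [hi] <;> omega
  have hnear : ∀ i : Fin n, nearestSet X i
      = (Finset.univ.erase i).filter fun j : Fin n => (((i : ℕ) < n / 2) ↔ ((j : ℕ) < n / 2)) := by
    intro i
    unfold nearestSet
    apply Finset.filter_congr
    intro j hj
    constructor
    · intro hmin
      by_contra hcross
      obtain ⟨l, hl, hls⟩ := hpartner i
      have h := hmin l (Finset.mem_erase.mpr ⟨hl, Finset.mem_univ l⟩)
      rw [hdist i j, hdist i l, if_neg hcross, if_pos hls] at h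
      linarith
    · intro hsame l hl
      rw [hdist i j, if_pos hsame, hdist i l]
      split_ifs <;> norm_num
  have hnearcard : ∀ i : Fin n, (nearestSet X i).card = m - 1 := by
    intro i
    rw [hnear i, Finset.filter_erase, Finset.card_erase_of_mem, hfiltercard i]
    exact Finset.mem_filter.mpr ⟨Finset.mem_univ i, Iff.rfl⟩
  have hcastm : ((m - 1 : ℕ) : ℝ) = (m:ℝ) - 1 := by
    have : (1:ℕ) ≤ m := by omega
    push_cast [this]
    ring
  -- entropy at σ = 0
  have hent0 : ∀ i : Fin n,
      entropy2 (condAffinity X 0 i) = fent ((m:ℝ) - 1) (m:ℝ) 0 / Real.log 2 := by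
    intro i
    have hiNS : i ∉ nearestSet X i := by
      rw [hnear i]
      intro h
      exact (Finset.notMem_erase i _) (Finset.mem_of_mem_filter i h)
    have key : ∀ j : Fin n, condAffinity X 0 i j * Real.logb 2 (condAffinity X 0 i j)
        = if j ∈ nearestSet X i then ((m:ℝ) - 1)⁻¹ * Real.logb 2 ((m:ℝ) - 1)⁻¹ else 0 := by
      intro j
      by_cases hji : j = i
      · rw [hji, if_neg hiNS]
        simp [condAffinity]
      · rw [condAffinity, if_neg hji, if_pos rfl]
        split_ifs with h
        · rw [hnearcard i, hcastm]
        · simp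
    unfold entropy2
    rw [Finset.sum_congr rfl (fun j _ => key j), Finset.sum_ite_mem, Finset.univ_inter,
      Finset.sum_const, hnearcard i, nsmul_eq_mul, hcastm, fent_zero, ← Real.log_div_log,
      Real.log_inv]
    field_simp
  -- uniform entropy description
  set Efun : ℝ → ℝ := fun s =>
    if s = 0 then fent ((m:ℝ) - 1) (m:ℝ) 0
    else fent ((m:ℝ) - 1) (m:ℝ) (Real.exp (-1 / (2 * s ^ 2))) with hEdef
  have hE : ∀ (σ' : ℝ) (i : Fin n),
      entropy2 (condAffinity X σ' i) = Efun σ' / Real.log 2 := by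
    intro σ' i
    by_cases h : σ' = 0
    · rw [h, hent0 i]; simp [hEdef]
    · rw [hent σ' h i]; simp [hEdef, h]
  have hIsCal : ∀ (σ₁ : ℝ) (i : Fin n), IsCalibrated X ρ i σ₁ →
      ∀ σ' : ℝ, 0 ≤ σ' → |Efun σ₁ - Real.log ρ| ≤ |Efun σ' - Real.log ρ| := by
    intro σ₁ i h σ' hσ'
    have h2 := h.2 σ' hσ'
    rw [hE σ₁ i, hE σ' i, ← Real.log_div_log, div_sub_div_same, div_sub_div_same,
      abs_div, abs_div, abs_of_pos hl2] at h2
    exact (div_le_div_iff_of_pos_right hl2).mp h2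
  have hmono := fent_strictMono ha0 hb0
  have htmem : ∀ σ' : ℝ, σ' ≠ 0 → Real.exp (-1 / (2 * σ' ^ 2)) ∈ Set.Ioo (0:ℝ) 1 := by
    intro σ' h
    refine ⟨Real.exp_pos _, ?_⟩
    have hs2 : (0:ℝ) < σ' ^ 2 := by positivity
    have : -1 / (2 * σ' ^ 2) < 0 := by
      apply div_neg_of_neg_of_pos <;> linarith
    calc Real.exp (-1 / (2 * σ' ^ 2)) < Real.exp 0 := Real.exp_lt_exp.mpr this
      _ = 1 := Real.exp_zero
  set t₁ := Real.exp (-1 / (2 * σ ^ 2)) with ht₁def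
  have ht₁ : t₁ ∈ Set.Ioo (0:ℝ) 1 := htmem σ hσpos.ne'
  have i₀ : Fin n := ⟨0, by omega⟩
  have hEσ : Efun σ = fent ((m:ℝ) - 1) (m:ℝ) t₁ := by simp [hEdef, hσpos.ne', ht₁def]
  -- Step A: fent 0 < log ρ
  have hA : fent ((m:ℝ) - 1) (m:ℝ) 0 < Real.log ρ := by
    by_contra hcon
    push_neg at hcon
    have h1 := hIsCal σ i₀ (hσ i₀) 0 le_rfl
    rw [hEσ] at h1
    have h0 : Efun 0 = fent ((m:ℝ) - 1) (m:ℝ) 0 := by simp [hEdef]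
    rw [h0] at h1
    have h2 : fent ((m:ℝ) - 1) (m:ℝ) 0 < fent ((m:ℝ) - 1) (m:ℝ) t₁ :=
      hmono ⟨le_rfl, zero_le_one⟩ ⟨ht₁.1.le, ht₁.2.le⟩ ht₁.1
    rw [abs_of_nonneg (by linarith), abs_of_nonneg (by linarith)] at h1
    linarith
  -- Step B: log ρ < fent 1
  have hB : Real.log ρ < fent ((m:ℝ) - 1) (m:ℝ) 1 := by
    rw [fent_one]
    have h : (m:ℝ) - 1 + m = (n:ℝ) - 1 := by rw [hnR]; ring
    rw [h]
    exact Real.log_lt_log (by linarith) hρ'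
  -- Step C: intermediate value
  obtain ⟨t₀, ht₀mem, ht₀⟩ : ∃ t₀ ∈ Set.Ioo (0:ℝ) 1,
      fent ((m:ℝ) - 1) (m:ℝ) t₀ = Real.log ρ := by
    have h := intermediate_value_Ioo (by norm_num : (0:ℝ) ≤ 1) (fent_cont ha0 hb0)
    obtain ⟨t₀, ht₀, heq⟩ := h ⟨hA, hB⟩
    exact ⟨t₀, ht₀, heq⟩
  -- Step D: realize t₀ by a positive bandwidth
  obtain ⟨σ₀, hσ₀pos, hσ₀t⟩ : ∃ σ₀ : ℝ, 0 < σ₀ ∧ Real.exp (-1 / (2 * σ₀ ^ 2)) = t₀ := by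
    have hlt : Real.log t₀ < 0 := Real.log_neg ht₀mem.1 ht₀mem.2
    have hpos : (0:ℝ) < 1 / (-2 * Real.log t₀) := by
      apply div_pos one_pos; linarith
    refine ⟨Real.sqrt (1 / (-2 * Real.log t₀)), Real.sqrt_pos.mpr hpos, ?_⟩
    rw [Real.sq_sqrt hpos.le]
    have h : -1 / (2 * (1 / (-2 * Real.log t₀))) = Real.log t₀ := by
      field_simp
    rw [h, Real.exp_log ht₀mem.1]
  have hEσ₀ : Efun σ₀ = Real.log ρ := by
    simp only [hEdef, hσ₀pos.ne', if_false]
    rw [hσ₀t, ht₀]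
  -- Step E: entropy of σ matches exactly
  have hfσ : fent ((m:ℝ) - 1) (m:ℝ) t₁ = Real.log ρ := by
    have h1 := hIsCal σ i₀ (hσ i₀) σ₀ hσ₀pos.le
    rw [hEσ, hEσ₀, sub_self, abs_zero] at h1
    have := abs_nonpos_iff.mp h1
    linarith [sub_eq_zero.mp this]
  -- Step F: sigmaStar equals σ
  have hstar : ∀ i : Fin n, sigmaStar X ρ i = σ := by
    intro i
    have hspec : IsCalibrated X ρ i (sigmaStar X ρ i) :=
      Classical.epsilon_spec (⟨σ, hσ i⟩ : ∃ s, IsCalibrated X ρ i s)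
    set σe := sigmaStar X ρ i with hσe
    have h1 := hIsCal σe i hspec σ hσpos.le
    rw [hEσ, hfσ, sub_self, abs_zero] at h1
    have hEe : Efun σe = Real.log ρ := by
      have := abs_nonpos_iff.mp h1
      linarith [sub_eq_zero.mp this]
    have hne : σe ≠ 0 := by
      intro h0
      rw [h0] at hEe
      simp only [hEdef, if_pos rfl] at hEe
      linarith
    have hEe' : fent ((m:ℝ) - 1) (m:ℝ) (Real.exp (-1 / (2 * σe ^ 2))) = Real.log ρ := by
      simpa [hEdef, hne] using hEe
    have hte := htmem σe hne
    have hteq : Real.exp (-1 / (2 * σe ^ 2)) = t₁ :=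
      hmono.injOn ⟨hte.1.le, hte.2.le⟩ ⟨ht₁.1.le, ht₁.2.le⟩ (by rw [hEe', hfσ])
    have h2 : -1 / (2 * σe ^ 2) = -1 / (2 * σ ^ 2) := Real.exp_eq_exp.mp hteq
    have hσe2 : (0:ℝ) < σe ^ 2 := by positivity
    have hσ2 : (0:ℝ) < σ ^ 2 := by positivity
    have h3 : σe ^ 2 = σ ^ 2 := by
      field_simp at h2
      linarith
    rw [← Real.sqrt_sq hspec.1, h3, Real.sqrt_sq hσpos.le]
  -- the common denominator
  have hZ0 : (0:ℝ) < ((m:ℝ) - 1) + m * t₁ := hZpos t₁ ht₁.1.le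
  have hnD : (n:ℝ) * (((m:ℝ) - 1) + m * t₁)
      = (n:ℝ) ^ 2 / 2 - n + (n:ℝ) ^ 2 / 2 * t₁ := by
    rw [hnR]; ring
  have hn0 : (0:ℝ) < (n:ℝ) := by rw [hnR]; linarith
  -- symmetrized affinity formula
  have hiffswap : ∀ (i j : Fin n) (c d : ℝ),
      (if (((j : ℕ) < n / 2) ↔ ((i : ℕ) < n / 2)) then c else d)
        = if (((i : ℕ) < n / 2) ↔ ((j : ℕ) < n / 2)) then c else d := by
    intro i j c d
    by_cases h : (i : ℕ) < n / 2 <;> by_cases h' : (j : ℕ) < n / 2 <;> simp [h, h']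
  have hP : ∀ i j : Fin n, i ≠ j → inAffinity X ρ i j
      = (if (((i : ℕ) < n / 2) ↔ ((j : ℕ) < n / 2)) then 1 else t₁)
        / ((n:ℝ) * (((m:ℝ) - 1) + m * t₁)) := by
    intro i j hij
    rw [inAffinity, if_neg hij, hstar i, hstar j, hcond σ hσpos.ne' j i hij,
      hcond σ hσpos.ne' i j (Ne.symm hij), hiffswap, ← ht₁def]
    have harith : ∀ x : ℝ, (x / (((m:ℝ) - 1) + m * t₁) + x / (((m:ℝ) - 1) + m * t₁)) / (2 * n)
        = x / ((n:ℝ) * (((m:ℝ) - 1) + m * t₁)) := by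
      intro x
      field_simp
      ring
    split_ifs with h
    · exact harith 1
    · exact harith t₁
  have hPpos : ∀ i j : Fin n, i ≠ j → 0 < inAffinity X ρ i j := by
    intro i j hij
    rw [hP i j hij]
    have hd : (0:ℝ) < (n:ℝ) * (((m:ℝ) - 1) + m * t₁) := by positivity
    split_ifs with h
    · positivity
    · exact div_pos ht₁.1 hd
  -- output distances
  have hYdist : ∀ i j : Fin n, (1 + ‖Y i - Y j‖ ^ 2)⁻¹
      = if (((i : ℕ) < n / 2) ↔ ((j : ℕ) < n / 2)) then 1 else t₁ := by
    intro i j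
    have he : 0 ≤ Real.exp (1 / (2 * σ ^ 2)) - 1 := by
      have := Real.one_le_exp (show (0:ℝ) ≤ 1 / (2 * σ ^ 2) by positivity)
      linarith
    have hs : ‖EuclideanSpace.single (0 : Fin 1)
        (Real.sqrt (Real.exp (1 / (2 * σ ^ 2)) - 1))‖ ^ 2
        = Real.exp (1 / (2 * σ ^ 2)) - 1 := by
      rw [EuclideanSpace.norm_single, Real.norm_eq_abs, sq_abs, Real.sq_sqrt he]
    have hval : (1 + (Real.exp (1 / (2 * σ ^ 2)) - 1))⁻¹ = t₁ := by
      rw [ht₁def]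
      have h1 : (1:ℝ) + (Real.exp (1 / (2 * σ ^ 2)) - 1) = Real.exp (1 / (2 * σ ^ 2)) := by ring
      have h2 : -1 / (2 * σ ^ 2) = -(1 / (2 * σ ^ 2)) := by ring
      rw [h1, h2, Real.exp_neg]
    rw [hY i, hY j]
    by_cases hi : (i : ℕ) < n / 2 <;> by_cases hj : (j : ℕ) < n / 2
    · simp [hi, hj]
    · rw [if_pos hi, if_neg hj,
        if_neg (show ¬(((i : ℕ) < n / 2) ↔ ((j : ℕ) < n / 2)) by simp [hi, hj]),
        zero_sub, norm_neg, hs, hval]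
    · rw [if_neg hi, if_pos hj,
        if_neg (show ¬(((i : ℕ) < n / 2) ↔ ((j : ℕ) < n / 2)) by simp [hi, hj]),
        sub_zero, hs, hval]
    · simp [hi, hj]
  -- denominator of Q for the special output
  have hQden : ∑ p ∈ (Finset.univ : Finset (Fin n)).offDiag, (1 + ‖Y p.1 - Y p.2‖ ^ 2)⁻¹
      = (n:ℝ) * (((m:ℝ) - 1) + m * t₁) := by
    have hsplit : ∑ p ∈ (Finset.univ : Finset (Fin n)).diag, (1 + ‖Y p.1 - Y p.2‖ ^ 2)⁻¹
        + ∑ p ∈ (Finset.univ : Finset (Fin n)).offDiag, (1 + ‖Y p.1 - Y p.2‖ ^ 2)⁻¹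
        = ∑ p ∈ Finset.univ ×ˢ Finset.univ, (1 + ‖Y p.1 - Y p.2‖ ^ 2)⁻¹ := by
      rw [← Finset.sum_union (Finset.disjoint_diag_offDiag _), Finset.diag_union_offDiag]
    have hprod : ∑ p ∈ (Finset.univ ×ˢ Finset.univ : Finset (Fin n × Fin n)),
        (1 + ‖Y p.1 - Y p.2‖ ^ 2)⁻¹ = (n:ℝ) * ((m:ℝ) * 1 + m * t₁) := by
      rw [Finset.sum_product]
      have h1 : ∀ i : Fin n, ∑ j : Fin n, (1 + ‖Y i - Y j‖ ^ 2)⁻¹ = (m:ℝ) * 1 + m * t₁ := by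
        intro i
        rw [Finset.sum_congr rfl (fun j _ => hYdist i j), hsumAux i 1 t₁]
      rw [Finset.sum_congr rfl (fun i _ => h1 i), Finset.sum_const, Finset.card_univ,
        Fintype.card_fin, nsmul_eq_mul]
    have hdiag : ∑ p ∈ (Finset.univ : Finset (Fin n)).diag, (1 + ‖Y p.1 - Y p.2‖ ^ 2)⁻¹
        = (n:ℝ) := by
      rw [Finset.sum_diag]
      have h1 : ∀ i : Fin n, (1 + ‖Y i - Y i‖ ^ 2)⁻¹ = (1:ℝ) := by
        intro i; simp
      rw [Finset.sum_congr rfl (fun i _ => h1 i), Finset.sum_const, Finset.card_univ,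
        Fintype.card_fin, nsmul_eq_mul, mul_one]
    have := hsplit
    rw [hprod, hdiag] at this
    linarith [this]
  -- positivity of Q denominators for arbitrary outputs
  have hoffne : ((Finset.univ : Finset (Fin n)).offDiag).Nonempty := by
    refine ⟨(⟨0, by omega⟩, ⟨1, by omega⟩), Finset.mem_offDiag.mpr
      ⟨Finset.mem_univ _, Finset.mem_univ _, ?_⟩⟩
    simp [Prod.ext_iff, Fin.ext_iff]
  have hden : ∀ Y' : Fin n → EuclideanSpace ℝ (Fin 1),
      0 < ∑ p ∈ (Finset.univ : Finset (Fin n)).offDiag, (1 + ‖Y' p.1 - Y' p.2‖ ^ 2)⁻¹ := by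
    intro Y'
    apply Finset.sum_pos (fun p _ => by positivity) hoffne
  -- conjunct 3
  have hc3 : ∀ i j : Fin n, outAffinity Y i j = inAffinity X ρ i j := by
    intro i j
    by_cases hij : i = j
    · rw [hij, outAffinity, if_pos rfl, inAffinity, if_pos rfl]
    · rw [outAffinity, if_neg hij, hQden, hYdist i j, hP i j hij]
  -- sums are one
  have hQsum : ∀ Y' : Fin n → EuclideanSpace ℝ (Fin 1),
      ∑ p ∈ (Finset.univ : Finset (Fin n)).offDiag, outAffinity Y' p.1 p.2 = 1 := by
    intro Y'
    have h1 : ∀ p ∈ (Finset.univ : Finset (Fin n)).offDiag, outAffinity Y' p.1 p.2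
        = (1 + ‖Y' p.1 - Y' p.2‖ ^ 2)⁻¹
          / ∑ q ∈ (Finset.univ : Finset (Fin n)).offDiag, (1 + ‖Y' q.1 - Y' q.2‖ ^ 2)⁻¹ := by
      intro p hp
      rw [outAffinity, if_neg (Finset.mem_offDiag.mp hp).2.2]
    rw [Finset.sum_congr rfl h1, ← Finset.sum_div, div_self (hden Y').ne']
  have hPsum : ∑ p ∈ (Finset.univ : Finset (Fin n)).offDiag, inAffinity X ρ p.1 p.2 = 1 := by
    rw [Finset.sum_congr rfl (fun p _ => (hc3 p.1 p.2).symm)]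
    exact hQsum Y
  have hQpos : ∀ (Y' : Fin n → EuclideanSpace ℝ (Fin 1)) (p : Fin n × Fin n),
      p ∈ (Finset.univ : Finset (Fin n)).offDiag → 0 < outAffinity Y' p.1 p.2 := by
    intro Y' p hp
    rw [outAffinity, if_neg (Finset.mem_offDiag.mp hp).2.2]
    have h1 : (0:ℝ) < (1 + ‖Y' p.1 - Y' p.2‖ ^ 2)⁻¹ := by positivity
    exact div_pos h1 (hden Y')
  -- conjunct 4
  have hc4 : tsneLoss X ρ Y = 0 := by
    unfold tsneLoss
    apply Finset.sum_eq_zero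
    intro p hp
    rw [hc3 p.1 p.2, div_self (hPpos p.1 p.2 (Finset.mem_offDiag.mp hp).2.2).ne',
      Real.log_one, mul_zero]
  refine ⟨?_, ?_, hc3, hc4, ?_⟩
  · intro i j hij hsame
    rw [hP i j hij, if_pos hsame, hnD, one_div]
  · intro i j hcross
    have hij : i ≠ j := by rintro rfl; exact hcross Iff.rfl
    rw [hP i j hij, if_neg hcross, hnD, ht₁def]
  · intro Y'
    rw [hc4]
    unfold tsneLoss
    have hterm : ∀ p ∈ (Finset.univ : Finset (Fin n)).offDiag,
        inAffinity X ρ p.1 p.2 - outAffinity Y' p.1 p.2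
          ≤ inAffinity X ρ p.1 p.2
            * Real.log (inAffinity X ρ p.1 p.2 / outAffinity Y' p.1 p.2) := by
      intro p hp
      have hP0 := hPpos p.1 p.2 (Finset.mem_offDiag.mp hp).2.2
      have hQ0 := hQpos Y' p hp
      have hlog := Real.log_le_sub_one_of_pos
        (show 0 < outAffinity Y' p.1 p.2 / inAffinity X ρ p.1 p.2 from div_pos hQ0 hP0)
      have hlogdiv : Real.log (inAffinity X ρ p.1 p.2 / outAffinity Y' p.1 p.2)
          = -Real.log (outAffinity Y' p.1 p.2 / inAffinity X ρ p.1 p.2) := by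
        rw [← Real.log_inv, inv_div]
      have h1 : 1 - outAffinity Y' p.1 p.2 / inAffinity X ρ p.1 p.2
          ≤ Real.log (inAffinity X ρ p.1 p.2 / outAffinity Y' p.1 p.2) := by
        rw [hlogdiv]; linarith
      have h2 : inAffinity X ρ p.1 p.2 - outAffinity Y' p.1 p.2
          = inAffinity X ρ p.1 p.2
            * (1 - outAffinity Y' p.1 p.2 / inAffinity X ρ p.1 p.2) := by
        rw [mul_sub, mul_one, mul_comm (inAffinity X ρ p.1 p.2),
          div_mul_cancel₀ _ hP0.ne']
      rw [h2]
      exact mul_le_mul_of_nonneg_left h1 hP0.le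
    have h3 := Finset.sum_le_sum hterm
    rw [Finset.sum_sub_distrib, hPsum, hQsum Y'] at h3
    linarith

end TSNEPaper
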